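/- For the scalar case L = 1 with T, R ∈ ℂ \ {0} and V ∈ ℂ, the set Λ = { E ∈ ℂ : the two eigenvalues of the 2×2 transfer matrix 𝒯^E have equal modulus } is exactly { E ∈ ℂ : (E − V)²/(R T) is real and lies in [0, 4] }. -/

import Mathlib

open Matrix

noncomputable section

lemma quad_spec_hn (a b c z : ℂ) :
    z ∈ spectrum ℂ (!![a, b; c, 0]) ↔ z * z - a * z - b * c = 0 := by
  rw [spectrum.mem_iff, Matrix.isUnit_iff_isUnit_det, isUnit_iff_ne_zero, not_not]
  have h : ((algebraMap ℂ (Matrix (Fin 2) (Fin 2) ℂ)) z - !![a, b; c, 0]).det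
      = z * z - a * z - b * c := by
    simp [Matrix.det_fin_two, Algebra.algebraMap_eq_smul_one, Matrix.smul_apply,
      Matrix.one_apply, Matrix.sub_apply]
    ring
  rw [h]

lemma abs_eq_one_of_hn (u : ℂ) (hu : u ≠ 0) (t : ℝ) (ht : u + u⁻¹ = (t : ℂ))
    (ht2 : |t| ≤ 2) : ‖u‖ = 1 := by
  have h1 : u * u - (t : ℂ) * u + 1 = 0 := by
    field_simp at ht
    linear_combination ht
  have h1c : (starRingEnd ℂ) u * (starRingEnd ℂ) u - (t : ℂ) * (starRingEnd ℂ) u + 1 = 0 := by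
    have := congrArg (starRingEnd ℂ) h1
    simpa [map_sub, map_add, _root_.map_mul, Complex.conj_ofReal] using this
  have hfac : (u - (starRingEnd ℂ) u) * (u + (starRingEnd ℂ) u - (t : ℂ)) = 0 := by
    linear_combination h1 - h1c
  rcases mul_eq_zero.mp hfac with h | h
  · have him : u = (u.re : ℂ) := by
      have : (starRingEnd ℂ) u = u := by linear_combination -h
      exact (Complex.conj_eq_iff_re.mp this).symm
    set r := u.re with hr
    have hre : r * r - t * r + 1 = 0 := by
      have := h1
      rw [him] at this
      exact_mod_cast this
    have hsq : (|r| - 1) ^ 2 ≤ 0 := by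
      nlinarith [abs_nonneg r, le_abs_self (t * r), abs_mul t r, sq_abs r,
        mul_le_mul_of_nonneg_right ht2 (abs_nonneg r)]
    have : |r| = 1 := by nlinarith [sq_nonneg (|r| - 1)]
    rw [him, Complex.norm_real, Real.norm_eq_abs]
    exact this
  · have hmul : u * (starRingEnd ℂ) u = 1 := by
      have hc : (starRingEnd ℂ) u = (t : ℂ) - u := by linear_combination h
      rw [hc]
      linear_combination -h1
    have hns : Complex.normSq u = 1 := by
      have := Complex.mul_conj u
      rw [hmul] at this
      exact_mod_cast this.symm
    have := Complex.sq_norm u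
    nlinarith [norm_nonneg u]

theorem lambda_set_hatano_nelson (T R V : ℂ) (hT : T ≠ 0) (hR : R ≠ 0) :
    {E : ℂ | ∀ z ∈ spectrum ℂ (!![(E - V) / T, -R; 1 / T, 0]),
        ∀ w ∈ spectrum ℂ (!![(E - V) / T, -R; 1 / T, 0]),
          ‖z‖ = ‖w‖}
      = {E : ℂ | ∃ x : ℝ, (E - V) ^ 2 / (R * T) = (x : ℂ) ∧ 0 ≤ x ∧ x ≤ 4} := by
  ext E
  set a : ℂ := (E - V) / T with ha
  set p : ℂ := R / T with hpdef
  have hp : p ≠ 0 := div_ne_zero hR hT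
  have hspec : ∀ z : ℂ, z ∈ spectrum ℂ (!![a, -R; 1 / T, 0]) ↔
      z * z - a * z + p = 0 := by
    intro z
    rw [quad_spec_hn]
    have hpe : p = R * (1 / T) := by rw [hpdef]; ring
    constructor <;> intro h
    · linear_combination h - hpe
    · linear_combination h + hpe
  have hap : (E - V) ^ 2 / (R * T) = a ^ 2 / p := by
    rw [ha, hpdef]
    field_simp
  simp only [Set.mem_setOf_eq]
  constructor
  · intro hE
    obtain ⟨s, hs⟩ := IsAlgClosed.exists_pow_nat_eq (k := ℂ) (a ^ 2 / 4 - p) (n := 2)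
      (by norm_num)
    set z₁ : ℂ := a / 2 + s with hz1
    set z₂ : ℂ := a / 2 - s with hz2
    have h1 : z₁ * z₁ - a * z₁ + p = 0 := by rw [hz1]; linear_combination hs
    have h2 : z₂ * z₂ - a * z₂ + p = 0 := by rw [hz2]; linear_combination hs
    have hprod : z₁ * z₂ = p := by rw [hz1, hz2]; linear_combination -hs
    have hsum : z₁ + z₂ = a := by rw [hz1, hz2]; ring
    have habs : ‖z₁‖ = ‖z₂‖ :=
      hE z₁ ((hspec z₁).mpr h1) z₂ ((hspec z₂).mpr h2)
    have hz1ne : z₁ ≠ 0 := by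
      intro h; apply hp; rw [← hprod, h, zero_mul]
    have hz2ne : z₂ ≠ 0 := by
      intro h; apply hp; rw [← hprod, h, mul_zero]
    set u : ℂ := z₁ / z₂ with hu
    have huabs : ‖u‖ = 1 := by
      rw [hu, norm_div, habs, div_self]
      exact (norm_ne_zero_iff).mpr hz2ne
    have hinv : u⁻¹ = (starRingEnd ℂ) u := by
      have hns : Complex.normSq u = 1 := by
        have := Complex.sq_norm u
        rw [huabs] at this
        simpa using this.symm
      rw [Complex.inv_def, hns]
      simp
    have hform : a ^ 2 / p = u + 2 + u⁻¹ := by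
      rw [hu, inv_div, ← hprod, ← hsum]
      field_simp
      ring
    have hrange := abs_le.mp (huabs ▸ Complex.abs_re_le_norm u)
    refine ⟨2 + 2 * u.re, ?_, by linarith [hrange.1], by linarith [hrange.2]⟩
    rw [hap, hform, hinv]
    have hac := Complex.add_conj u
    push_cast at hac ⊢
    linear_combination hac
  · rintro ⟨x, hx, hx0, hx4⟩
    intro z hz w hw
    rw [hspec] at hz hw
    have hxa : a ^ 2 = (x : ℂ) * p := by
      have h' : a ^ 2 / p = (x : ℂ) := by rw [← hap]; exact hx
      field_simp at h'
      linear_combination h'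
    have hzne : z ≠ 0 := by
      intro h; subst h; simp at hz; exact hp hz
    have hwne : w ≠ 0 := by
      intro h; subst h; simp at hw; exact hp hw
    have hfac : (z - w) * (z + w - a) = 0 := by linear_combination hz - hw
    rcases mul_eq_zero.mp hfac with h | h
    · rw [sub_eq_zero.mp h]
    · have hprod2 : z * w = p := by linear_combination -hz + z * h
      have hu0 : z / w ≠ 0 := div_ne_zero hzne hwne
      have hsum2 : z / w + (z / w)⁻¹ = ((x - 2 : ℝ) : ℂ) := by
        rw [inv_div]
        push_cast
        field_simp
        linear_combination hz + hw + a * h + hxa + ((2 : ℂ) - x) * hprod2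
      have ht2 : |x - 2| ≤ 2 := abs_le.mpr ⟨by linarith, by linarith⟩
      have habs1 := abs_eq_one_of_hn (z / w) hu0 (x - 2) hsum2 ht2
      rw [norm_div] at habs1
      have hwabs : ‖w‖ ≠ 0 := (norm_ne_zero_iff).mpr hwne
      field_simp at habs1
      exact habs1
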